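/- If T : H → H is nonexpansive on a Hilbert space and has a fixed point, then for any ρ ∈ (0,1), the Mann iteration v_{k+1} = (1-ρ) v_k + ρ T(v_k) converges (weakly) to a fixed point of T. -/

import Mathlib

open Filter Topology

section Aux

variable {H : Type*} [NormedAddCommGroup H] [InnerProductSpace ℝ H]

lemma mann_convex_norm_sq (ρ : ℝ) (a b : H) :
    ‖(1 - ρ) • a + ρ • b‖ ^ 2
      = (1 - ρ) * ‖a‖ ^ 2 + ρ * ‖b‖ ^ 2 - ρ * (1 - ρ) * ‖a - b‖ ^ 2 := by
  have h1 : ‖a - b‖ ^ 2 = ‖a‖ ^ 2 - 2 * inner ℝ a b + ‖b‖ ^ 2 := norm_sub_sq_real a b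
  have h2 : ‖(1 - ρ) • a + ρ • b‖ ^ 2
      = ‖(1 - ρ) • a‖ ^ 2 + 2 * inner ℝ ((1 - ρ) • a) (ρ • b) + ‖ρ • b‖ ^ 2 :=
    norm_add_sq_real _ _
  rw [h2, norm_smul, norm_smul, real_inner_smul_left, real_inner_smul_right]
  simp only [Real.norm_eq_abs, mul_pow, sq_abs]
  nlinarith [h1]

end Aux

theorem mann_iteration_weak_convergence
    (H : Type*) [NormedAddCommGroup H] [InnerProductSpace ℝ H] [CompleteSpace H]
    (T : H → H) (hT : ∀ x y, ‖T x - T y‖ ≤ ‖x - y‖)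
    (hfix : ∃ z, T z = z)
    (ρ : ℝ) (hρ : ρ ∈ Set.Ioo (0 : ℝ) 1)
    (v : ℕ → H)
    (hv : ∀ k, v (k + 1) = (1 - ρ) • v k + ρ • T (v k)) :
    ∃ p, T p = p ∧
      ∀ w : H, Filter.Tendsto (fun k => (inner ℝ (v k) w : ℝ)) Filter.atTop
        (nhds (inner ℝ p w : ℝ)) := by
  obtain ⟨z, hz⟩ := hfix
  obtain ⟨hρ0, hρ1⟩ := hρ
  have hρρ : 0 < ρ * (1 - ρ) := mul_pos hρ0 (by linarith)
  -- Fejér monotonicity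
  have fej : ∀ q, T q = q → ∀ k, ‖v (k + 1) - q‖ ≤ ‖v k - q‖ := by
    intro q hq k
    have : v (k + 1) - q = (1 - ρ) • (v k - q) + ρ • (T (v k) - q) := by
      rw [hv k]; module
    rw [this]
    calc ‖(1 - ρ) • (v k - q) + ρ • (T (v k) - q)‖
        ≤ ‖(1 - ρ) • (v k - q)‖ + ‖ρ • (T (v k) - q)‖ := norm_add_le _ _
      _ = (1 - ρ) * ‖v k - q‖ + ρ * ‖T (v k) - q‖ := by
          rw [norm_smul, norm_smul, Real.norm_eq_abs, Real.norm_eq_abs,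
            abs_of_pos hρ0, abs_of_pos (by linarith : (0:ℝ) < 1 - ρ)]
      _ ≤ (1 - ρ) * ‖v k - q‖ + ρ * ‖v k - q‖ := by
          have := hT (v k) q
          rw [hq] at this
          nlinarith
      _ = ‖v k - q‖ := by ring
  -- key inequality
  have key : ∀ k, ‖v (k + 1) - z‖ ^ 2
      ≤ ‖v k - z‖ ^ 2 - ρ * (1 - ρ) * ‖v k - T (v k)‖ ^ 2 := by
    intro k
    have hdecomp : v (k + 1) - z = (1 - ρ) • (v k - z) + ρ • (T (v k) - z) := by
      rw [hv k]; module
    have hsub : (v k - z) - (T (v k) - z) = v k - T (v k) := by abel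
    have hTle : ‖T (v k) - z‖ ≤ ‖v k - z‖ := by
      have := hT (v k) z; rwa [hz] at this
    have hsq : ‖T (v k) - z‖ ^ 2 ≤ ‖v k - z‖ ^ 2 := by
      nlinarith [norm_nonneg (v k - z), norm_nonneg (T (v k) - z)]
    rw [hdecomp, mann_convex_norm_sq, hsub]
    nlinarith [hsq]
  -- limits of distances to fixed points
  have hanti : ∀ q, T q = q → Antitone fun k => ‖v k - q‖ := by
    intro q hq
    exact antitone_nat_of_succ_le (fej q hq)
  have hlim : ∀ q, T q = q → ∃ L, Tendsto (fun k => ‖v k - q‖) atTop (𝓝 L) := by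
    intro q hq
    refine ⟨_, tendsto_atTop_ciInf (hanti q hq) ⟨0, ?_⟩⟩
    rintro x ⟨k, rfl⟩; exact norm_nonneg _
  -- asymptotic regularity
  have hreg : Tendsto (fun k => ‖v k - T (v k)‖) atTop (𝓝 0) := by
    obtain ⟨L, hL⟩ := hlim z hz
    have hsq : Tendsto (fun k => ‖v k - z‖ ^ 2 - ‖v (k + 1) - z‖ ^ 2) atTop (𝓝 0) := by
      have h1 : Tendsto (fun k => ‖v k - z‖ ^ 2) atTop (𝓝 (L ^ 2)) := hL.pow 2
      have h2 : Tendsto (fun k => ‖v (k + 1) - z‖ ^ 2) atTop (𝓝 (L ^ 2)) :=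
        h1.comp (tendsto_add_atTop_nat 1)
      simpa using h1.sub h2
    have hsq2 : Tendsto (fun k => ‖v k - T (v k)‖ ^ 2) atTop (𝓝 0) := by
      apply squeeze_zero (fun k => sq_nonneg _)
        (g := fun k => (‖v k - z‖ ^ 2 - ‖v (k + 1) - z‖ ^ 2) / (ρ * (1 - ρ)))
      · intro k
        rw [le_div_iff₀ hρρ]
        nlinarith [key k]
      · simpa using hsq.div_const (ρ * (1 - ρ))
    have := hsq2.sqrt
    simpa [Real.sqrt_sq (norm_nonneg _)] using this
  -- boundedness
  have hbound : ∀ k, ‖v k - z‖ ≤ ‖v 0 - z‖ := fun k => hanti z hz (Nat.zero_le k)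
  have hnorm : ∀ k, ‖v k‖ ≤ ‖v 0 - z‖ + ‖z‖ := by
    intro k
    have h0 : v k = (v k - z) + z := by abel
    calc ‖v k‖ = ‖v k - z + z‖ := by rw [← h0]
      _ ≤ ‖v k - z‖ + ‖z‖ := norm_add_le _ _
      _ ≤ ‖v 0 - z‖ + ‖z‖ := by linarith [hbound k]
  -- main demiclosedness lemma
  have main : ∀ (G : Filter ℕ), G.NeBot → G ≤ atTop → ∀ p : H,
      (∀ y : H, Tendsto (fun k => (inner ℝ (v k) y : ℝ)) G (𝓝 (inner ℝ p y))) → T p = p := by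
    intro G hG hGle p hp
    haveI := hG
    set ε : ℕ → ℝ := fun k => ‖v k - T (v k)‖ with hεdef
    have hε0 : ∀ k, 0 ≤ ε k := fun k => norm_nonneg _
    set M : ℝ := ‖v 0 - z‖ + ‖z - p‖ with hMdef
    have hfM : ∀ k, ‖v k - p‖ ≤ M := by
      intro k
      have h0 : v k - p = (v k - z) + (z - p) := by abel
      calc ‖v k - p‖ = ‖(v k - z) + (z - p)‖ := by rw [← h0]
        _ ≤ ‖v k - z‖ + ‖z - p‖ := norm_add_le _ _
        _ ≤ M := by have := hbound k; rw [hMdef]; linarith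
    have hexpand : ∀ k, ‖v k - T p‖ ^ 2
        = ‖v k - p‖ ^ 2 + 2 * inner ℝ (v k - p) (p - T p) + ‖p - T p‖ ^ 2 := by
      intro k
      have h0 : v k - T p = (v k - p) + (p - T p) := by abel
      rw [h0, norm_add_sq_real]
    have hub : ∀ k, ‖v k - T p‖ ≤ ε k + ‖v k - p‖ := by
      intro k
      have h0 : v k - T p = (v k - T (v k)) + (T (v k) - T p) := by abel
      calc ‖v k - T p‖ = ‖(v k - T (v k)) + (T (v k) - T p)‖ := by rw [← h0]
        _ ≤ ‖v k - T (v k)‖ + ‖T (v k) - T p‖ := norm_add_le _ _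
        _ ≤ ε k + ‖v k - p‖ := by have := hT (v k) p; simp only [hεdef]; linarith
    have hineq : ∀ k, ‖p - T p‖ ^ 2
        ≤ ε k ^ 2 + 2 * ε k * M - 2 * inner ℝ (v k - p) (p - T p) := by
      intro k
      have h1 := hexpand k
      have h2 : ‖v k - T p‖ ^ 2 ≤ (ε k + ‖v k - p‖) ^ 2 := by
        have := hub k
        nlinarith [norm_nonneg (v k - T p), hε0 k, norm_nonneg (v k - p)]
      nlinarith [hfM k, hε0 k, norm_nonneg (v k - p)]
    have hεG : Tendsto ε G (𝓝 0) := hreg.mono_left hGle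
    have hg : Tendsto (fun k => 2 * (inner ℝ (v k - p) (p - T p) : ℝ)) G (𝓝 0) := by
      have h1 := hp (p - T p)
      have h2 : Tendsto (fun k => 2 * ((inner ℝ (v k) (p - T p) : ℝ) - inner ℝ p (p - T p)))
          G (𝓝 (2 * ((inner ℝ p (p - T p) : ℝ) - inner ℝ p (p - T p)))) :=
        ((h1.sub_const _).const_mul 2)
      simp only [sub_self, mul_zero] at h2
      refine h2.congr fun k => ?_
      rw [inner_sub_left]
    have hrhs : Tendsto (fun k => ε k ^ 2 + 2 * ε k * M - 2 * (inner ℝ (v k - p) (p - T p) : ℝ))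
        G (𝓝 0) := by
      have h3 : Tendsto (fun k => ε k ^ 2 + 2 * ε k * M) G (𝓝 (0 ^ 2 + 2 * 0 * M)) := by
        exact Tendsto.add (hεG.pow 2) ((hεG.const_mul 2).mul_const M)
      have h4 := h3.sub hg
      norm_num at h4
      exact h4
    have hc : ‖p - T p‖ ^ 2 ≤ 0 := ge_of_tendsto' hrhs hineq
    have h5 : ‖p - T p‖ = 0 := by nlinarith [norm_nonneg (p - T p)]
    have h6 : p - T p = 0 := norm_eq_zero.mp h5
    have := sub_eq_zero.mp h6
    exact this.symm
  -- uniqueness lemma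
  have uniq : ∀ (G₁ G₂ : Filter ℕ), G₁.NeBot → G₂.NeBot → G₁ ≤ atTop → G₂ ≤ atTop →
      ∀ p q : H, T p = p → T q = q →
      (∀ y : H, Tendsto (fun k => (inner ℝ (v k) y : ℝ)) G₁ (𝓝 (inner ℝ p y))) →
      (∀ y : H, Tendsto (fun k => (inner ℝ (v k) y : ℝ)) G₂ (𝓝 (inner ℝ q y))) →
      p = q := by
    intro G₁ G₂ h1 h2 hle1 hle2 p q hpf hqf hp hq
    haveI := h1; haveI := h2
    obtain ⟨Lp, hLp⟩ := hlim p hpf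
    obtain ⟨Lq, hLq⟩ := hlim q hqf
    have hexp : ∀ k, (inner ℝ (v k) (p - q) : ℝ)
        = (‖v k - q‖ ^ 2 - ‖v k - p‖ ^ 2 + ‖p‖ ^ 2 - ‖q‖ ^ 2) / 2 := by
      intro k
      have e1 : ‖v k - p‖ ^ 2 = ‖v k‖ ^ 2 - 2 * inner ℝ (v k) p + ‖p‖ ^ 2 :=
        norm_sub_sq_real _ _
      have e2 : ‖v k - q‖ ^ 2 = ‖v k‖ ^ 2 - 2 * inner ℝ (v k) q + ‖q‖ ^ 2 :=
        norm_sub_sq_real _ _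
      rw [inner_sub_right]
      linarith [e1, e2]
    set C : ℝ := ((Lq ^ 2 - Lp ^ 2 + ‖p‖ ^ 2) - ‖q‖ ^ 2) / 2 with hC
    have hconv : Tendsto (fun k => (inner ℝ (v k) (p - q) : ℝ)) atTop (𝓝 C) := by
      have h3 := ((((hLq.pow 2).sub (hLp.pow 2)).add_const (‖p‖ ^ 2)).sub_const
        (‖q‖ ^ 2)).div_const 2
      refine h3.congr fun k => ?_
      rw [← hexp k]
    have ep : (inner ℝ p (p - q) : ℝ) = C :=
      tendsto_nhds_unique (hp (p - q)) (hconv.mono_left hle1)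
    have eq' : (inner ℝ q (p - q) : ℝ) = C :=
      tendsto_nhds_unique (hq (p - q)) (hconv.mono_left hle2)
    have h7 : (inner ℝ (p - q) (p - q) : ℝ) = 0 := by
      rw [inner_sub_left, ep, eq']; ring
    have := inner_self_eq_zero.mp h7
    exact sub_eq_zero.mp this
  -- compactness setup
  set Φ : ℕ → WeakDual ℝ H :=
    fun k => StrongDual.toWeakDual (InnerProductSpace.toDual ℝ H (v k)) with hΦ
  set R : ℝ := ‖v 0 - z‖ + ‖z‖ with hR
  set K : Set (WeakDual ℝ H) :=
    WeakDual.toStrongDual ⁻¹' Metric.closedBall (0 : StrongDual ℝ H) R with hK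
  have hKc : IsCompact K := WeakDual.isCompact_closedBall (0 : StrongDual ℝ H) R
  have hΦK : ∀ k, Φ k ∈ K := by
    intro k
    simp only [hK, Set.mem_preimage, Metric.mem_closedBall, dist_zero_right]
    have h0 : WeakDual.toStrongDual (Φ k) = InnerProductSpace.toDual ℝ H (v k) := rfl
    rw [h0, LinearIsometryEquiv.norm_map]
    exact hnorm k
  have mkG : ∀ P : WeakDual ℝ H, MapClusterPt P atTop Φ →
      ∃ G : Filter ℕ, G.NeBot ∧ G ≤ atTop ∧
        ∀ y : H, Tendsto (fun k => (inner ℝ (v k) y : ℝ)) G (𝓝 (P y)) := by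
    intro P hP
    refine ⟨atTop ⊓ Filter.comap Φ (𝓝 P), ?_, inf_le_left, ?_⟩
    · rw [← Filter.map_neBot_iff Φ, Filter.push_pull]
      rw [inf_comm]
      exact hP
    · intro y
      have hΦt : Tendsto Φ (atTop ⊓ Filter.comap Φ (𝓝 P)) (𝓝 P) :=
        tendsto_comap.mono_left inf_le_right
      have h8 := ((WeakDual.eval_continuous y).tendsto P).comp hΦt
      exact h8.congr fun k => rfl
  have hPle : Filter.map Φ atTop ≤ Filter.principal K :=
    Filter.le_principal_iff.mpr (Filter.mem_map.mpr (Filter.Eventually.of_forall hΦK))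
  obtain ⟨P, hPK, hPcl⟩ := hKc.exists_mapClusterPt hPle
  set p : H := (InnerProductSpace.toDual ℝ H).symm (WeakDual.toStrongDual P) with hpdef
  have hPy : ∀ y : H, P y = (inner ℝ p y : ℝ) := by
    intro y
    rw [hpdef]
    exact (InnerProductSpace.toDual_symm_apply).symm
  obtain ⟨G, hGne, hGle, hGy⟩ := mkG P hPcl
  have hGy' : ∀ y : H, Tendsto (fun k => (inner ℝ (v k) y : ℝ)) G (𝓝 (inner ℝ p y)) := by
    intro y; rw [← hPy y]; exact hGy y
  have hpfix : T p = p := main G hGne hGle p hGy'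
  refine ⟨p, hpfix, ?_⟩
  have hTend : Tendsto Φ atTop (𝓝 P) := by
    apply hKc.tendsto_nhds_of_unique_mapClusterPt (Filter.Eventually.of_forall hΦK)
    intro Q hQK hQcl
    obtain ⟨G', hG'ne, hG'le, hG'y⟩ := mkG Q hQcl
    set q : H := (InnerProductSpace.toDual ℝ H).symm (WeakDual.toStrongDual Q) with hqdef
    have hQy : ∀ y : H, Q y = (inner ℝ q y : ℝ) := by
      intro y
      rw [hqdef]
      exact (InnerProductSpace.toDual_symm_apply).symm
    have hG'y' : ∀ y : H, Tendsto (fun k => (inner ℝ (v k) y : ℝ)) G' (𝓝 (inner ℝ q y)) := by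
      intro y; rw [← hQy y]; exact hG'y y
    have hqfix : T q = q := main G' hG'ne hG'le q hG'y'
    have hqp : q = p := uniq G' G hG'ne hGne hG'le hGle q p hqfix hpfix hG'y' hGy'
    apply DFunLike.ext
    intro y
    rw [hQy y, hPy y, hqp]
  intro w
  have h9 := ((WeakDual.eval_continuous w).tendsto P).comp hTend
  rw [hPy w] at h9
  exact h9.congr fun k => rfl
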